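/- Fix a finite set X = {0 = x_1 < ... < x_N = 1} with minimal gap h. The set of continuous functions f with |f(x_{i+1}) − f(x_i)| > h for all i = 1,...,N−1 is open in C([0,1]), and for any g ∈ C([0,1]) and ε > h there exists f in this set with ‖f − g‖_∞ < ε. -/

import Mathlib

open Set Filter Topology List

noncomputable section

abbrev I01 : Set ℝ := Set.Icc 0 1

abbrev CI := C(I01, ℝ)

/-- Evaluate `f ∈ C([0,1])` at a real number (via projection onto `[0,1]`;
for `x ∈ [0,1]` this is just `f x`). -/
def evalI (f : CI) (x : ℝ) : ℝ := f (Set.projIcc 0 1 (by norm_num) x)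

/-- The list of gaps between consecutive points. -/
def gaps (l : List ℝ) : List ℝ := List.zipWith (fun a b => b - a) l l.tail

/-- Maximal resolution (maximal gap). -/
def maxGap (l : List ℝ) : ℝ := (gaps l).foldr max 0

/-- Minimal resolution (minimal gap). -/
def minGap (l : List ℝ) : ℝ := (gaps l).foldr min 1

def intDiffs (l : List ℤ) : List ℤ := List.zipWith (fun a b => b - a) l l.tail

/-- Quantitative code of `f` with respect to the discretization `X` and step `h`. -/
def Qcode (f : CI) (X : List ℝ) (h : ℝ) : List ℤ :=
  intDiffs (X.map fun x => ⌊evalI f x / h⌋)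

/-- Qualitative code: the signs of the quantitative code. -/
def qcode (f : CI) (X : List ℝ) (h : ℝ) : List ℤ := (Qcode f X h).map Int.sign

/-- Stretched code: each positive entry `z` of the quantitative code becomes `z` ones
followed by a zero, each negative entry `z` becomes `|z|` minus-ones followed by a zero,
and each zero entry a single zero. -/
def scode (f : CI) (X : List ℝ) (h : ℝ) : List ℤ :=
  (Qcode f X h).flatMap fun z =>
    if 0 < z then List.replicate z.toNat 1 ++ [0]
    else if z < 0 then List.replicate (-z).toNat (-1) ++ [0]
    else [0]

/-- Number of occurrences of the word `w` in the word `v`. -/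
def oc {A : Type*} [DecidableEq A] (w v : List A) : ℕ :=
  ((List.range (v.length - w.length + 1)).filter
    fun j => (v.drop j).take w.length = w).length

/-- Relative frequency of the word `w` in the word `v`. -/
def freq {A : Type*} [DecidableEq A] (w v : List A) : ℝ := (oc w v : ℝ) / v.length

/-- Minimal periodic factor length of `w`. -/
def pmin {A : Type*} [DecidableEq A] (w : List A) : ℕ :=
  sInf {s : ℕ | 0 < s ∧ ∃ u : List A, u.length = s ∧ oc w (w ++ u) = 2}

/-- A discretization system of `[0,1]`. -/
structure DiscretizationSystem where
  X : ℕ → List ℝ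
  sorted : ∀ n, (X n).Chain' (· < ·)
  mem_Icc : ∀ n, ∀ x ∈ X n, x ∈ I01
  head_eq : ∀ n, (X n).head? = some 0
  last_eq : ∀ n, (X n).getLast? = some 1
  nested : ∀ n, ∀ x ∈ X n, x ∈ X (n + 1)
  maxres_to_zero : Tendsto (fun n => maxGap (X n)) atTop (nhds 0)

section Aux

/-- Greedy pick: whichever of `gr x ± c` is farther from `p`. -/
noncomputable def pick (c : ℝ) (gr : ℝ → ℝ) (p x : ℝ) : ℝ :=
  if |gr x - c - p| ≤ |gr x + c - p| then gr x + c else gr x - c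

lemma pick_dist {c : ℝ} (hc : 0 ≤ c) (gr : ℝ → ℝ) (p x : ℝ) :
    c ≤ |pick c gr p x - p| := by
  unfold pick
  have key : 2 * c ≤ |gr x + c - p| + |gr x - c - p| := by
    have h1 : (gr x + c - p) - (gr x - c - p) = 2 * c := by ring
    have h2 : |(gr x + c - p) - (gr x - c - p)| ≤ |gr x + c - p| + |gr x - c - p| := by
      rw [sub_eq_add_neg]
      exact (abs_add_le _ _).trans (by rw [abs_neg])
    rw [h1, abs_of_nonneg (by linarith)] at h2
    exact h2
  split_ifs with hif
  · linarith [abs_nonneg (gr x + c - p)]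
  · push_neg at hif; linarith

lemma pick_close {c : ℝ} (hc : 0 ≤ c) (gr : ℝ → ℝ) (p x : ℝ) :
    |pick c gr p x - gr x| = c := by
  unfold pick
  split_ifs with hif
  · rw [show gr x + c - gr x = c by ring, abs_of_nonneg hc]
  · rw [show gr x - c - gr x = -c by ring, abs_neg, abs_of_nonneg hc]

/-- Greedy list of values. -/
noncomputable def vals (c : ℝ) (gr : ℝ → ℝ) : List ℝ → ℝ → List ℝ
  | [], _ => []
  | x :: xs, p => pick c gr p x :: vals c gr xs (pick c gr p x)

lemma vals_length (c : ℝ) (gr : ℝ → ℝ) :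
    ∀ (X : List ℝ) (p : ℝ), (vals c gr X p).length = X.length
  | [], _ => rfl
  | x :: xs, p => by simp [vals, vals_length c gr xs]

lemma vals_chain {c : ℝ} (hc : 0 ≤ c) (gr : ℝ → ℝ) :
    ∀ (X : List ℝ) (p : ℝ), List.Chain (fun a b => c ≤ |b - a|) p (vals c gr X p)
  | [], _ => List.Chain.nil
  | x :: xs, p => List.Chain.cons (pick_dist hc gr p x) (vals_chain hc gr xs _)

lemma vals_getElem {c : ℝ} (hc : 0 ≤ c) (gr : ℝ → ℝ) :
    ∀ (X : List ℝ) (p : ℝ) (i : ℕ) (hi : i < X.length),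
      |(vals c gr X p)[i]'(by rw [vals_length]; exact hi) - gr (X[i]'hi)| = c
  | x :: xs, p, 0, hi => by simpa [vals] using pick_close hc gr p x
  | x :: xs, p, i + 1, hi => by
      simpa [vals] using vals_getElem hc gr xs _ i (Nat.lt_of_succ_lt_succ hi)

lemma open_chain (h : ℝ) :
    ∀ X : List ℝ, IsOpen {f : CI | X.Chain' fun a b => h < |evalI f b - evalI f a|}
  | [] => by simp [List.Chain']
  | [a] => by simp [List.Chain']
  | a :: b :: t => by
    have h1 : IsOpen {f : CI | h < |evalI f b - evalI f a|} := by
      have hc : Continuous fun f : CI => |evalI f b - evalI f a| := by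
        apply Continuous.abs
        exact (continuous_eval_const _).sub
          (continuous_eval_const _)
      exact isOpen_lt continuous_const hc
    have h2 := open_chain h (b :: t)
    have heq : {f : CI | (a :: b :: t).Chain' fun a b => h < |evalI f b - evalI f a|} =
        {f : CI | h < |evalI f b - evalI f a|} ∩
          {f : CI | (b :: t).Chain' fun a b => h < |evalI f b - evalI f a|} := by
      ext f
      simp [List.Chain', List.isChain_cons_cons, Set.mem_inter_iff]
    rw [heq]
    exact h1.inter h2

lemma gaps_pos : ∀ X : List ℝ, X.Chain' (· < ·) → ∀ y ∈ gaps X, 0 < y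
  | [], _, y, hy => by simp [gaps] at hy
  | [a], _, y, hy => by simp [gaps] at hy
  | a :: b :: t, hch, y, hy => by
    rw [List.Chain', List.isChain_cons_cons] at hch
    simp only [gaps, List.tail_cons, List.zipWith_cons_cons, List.mem_cons] at hy
    rcases hy with rfl | hy
    · linarith [hch.1]
    · exact gaps_pos (b :: t) hch.2 y (by simpa [gaps] using hy)

lemma foldr_min_pos : ∀ l : List ℝ, (∀ y ∈ l, 0 < y) → 0 < l.foldr min 1
  | [], _ => one_pos
  | a :: t, h => by
    simp only [List.foldr_cons]
    exact lt_min (h a (by simp)) (foldr_min_pos t fun y hy => h y (by simp [hy]))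

end Aux

/-- the set of `f` whose consecutive increments along a fixed
discretization `X` all exceed the minimal gap `h` is open, and any `g` can be
`ε`-approximated by such an `f` whenever `ε > h`. -/
theorem stmt9 (X : List ℝ) (hch : X.Chain' (· < ·)) (hsub : ∀ x ∈ X, x ∈ I01)
    (h0 : X.head? = some 0) (h1 : X.getLast? = some 1) :
    IsOpen {f : CI | X.Chain' fun a b => minGap X < |evalI f b - evalI f a|} ∧
    ∀ g : CI, ∀ ε : ℝ, minGap X < ε →
      ∃ f ∈ {f : CI | X.Chain' fun a b => minGap X < |evalI f b - evalI f a|},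
        dist f g < ε := by
  
  constructor
  · exact open_chain (minGap X) X
  · intro g ε hε
    set h := minGap X with hh_def
    have hh : 0 < h := foldr_min_pos _ (gaps_pos X hch)
    set c : ℝ := (h + ε) / 2 with hc_def
    have hc1 : h < c := by simp only [hc_def]; linarith
    have hc2 : c < ε := by simp only [hc_def]; linarith
    have hc0 : 0 < c := lt_trans hh hc1
    set gr : ℝ → ℝ := evalI g with hgr_def
    set Y : List ℝ := vals c gr X 0 with hY_def
    have hYlen : Y.length = X.length := vals_length c gr X 0
    set n : ℕ := X.length with hn_def
    set v : Fin n → ℝ := fun i => X[(i : ℕ)]'i.isLt with hv_def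
    set r : Fin n → ℝ :=
      fun i => (Y[(i : ℕ)]'(by rw [hYlen]; exact i.isLt)) - gr (v i) with hr_def
    -- injectivity of nodes
    have hpw : X.Pairwise (· < ·) := List.isChain_iff_pairwise.mp hch
    have hnd : X.Nodup := hpw.imp ne_of_lt
    have hvinj : Set.InjOn v ↑(Finset.univ : Finset (Fin n)) := by
      intro i _ j _ hij
      have hinj : Function.Injective X.get := List.nodup_iff_injective_get.mp hnd
      have : X.get ⟨i, i.isLt⟩ = X.get ⟨j, j.isLt⟩ := by
        simpa [hv_def, List.get_eq_getElem] using hij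
      have := hinj this
      exact Fin.ext (by simpa using congrArg Fin.val this)
    set P := Lagrange.interpolate (Finset.univ : Finset (Fin n)) v r with hP_def
    set φ : ℝ → ℝ := fun t => max (-c) (min c (P.eval t)) with hφ_def
    have hφcont : Continuous φ :=
      continuous_const.max (continuous_const.min P.continuous)
    have hφle : ∀ t, |φ t| ≤ c := by
      intro t
      rw [abs_le]
      exact ⟨le_max_left _ _, max_le (by linarith) (min_le_left _ _)⟩
    set Φ : CI := ⟨fun t => φ (t : ℝ), hφcont.comp continuous_subtype_val⟩ with hΦ_def
    set f : CI := g + Φ with hf_def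
    -- distance bound
    have hdist : dist f g ≤ c := by
      rw [ContinuousMap.dist_le hc0.le]
      intro x
      have : f x = g x + φ (x : ℝ) := rfl
      rw [this, Real.dist_eq, add_sub_cancel_left]
      exact hφle _
    -- node values
    have hnode : ∀ i : Fin n, evalI f (X[(i : ℕ)]'i.isLt) =
        Y[(i : ℕ)]'(by rw [hYlen]; exact i.isLt) := by
      intro i
      have hmem : (X[(i : ℕ)]'i.isLt) ∈ I01 := hsub _ (List.getElem_mem _)
      have hproj : Set.projIcc (0:ℝ) 1 (by norm_num) (X[(i : ℕ)]'i.isLt) =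
          ⟨X[(i : ℕ)]'i.isLt, hmem⟩ := Set.projIcc_of_mem _ hmem
      have habs : |r i| = c := by
        rw [hr_def]
        exact vals_getElem hc0.le gr X 0 i i.isLt
      have hre : |r i| ≤ c := le_of_eq habs
      rw [abs_le] at hre
      have heval : P.eval (v i) = r i :=
        Lagrange.eval_interpolate_at_node r hvinj (Finset.mem_univ i)
      have hφv : φ (v i) = r i := by
        rw [hφ_def]
        simp only [heval]
        rw [min_eq_right hre.2, max_eq_right hre.1]
      have hgr : gr (X[(i : ℕ)]'i.isLt) = g ⟨X[(i : ℕ)]'i.isLt, hmem⟩ := by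
        rw [hgr_def]; unfold evalI; rw [hproj]
      calc evalI f (X[(i : ℕ)]'i.isLt)
          = f ⟨X[(i : ℕ)]'i.isLt, hmem⟩ := by unfold evalI; rw [hproj]
        _ = g ⟨X[(i : ℕ)]'i.isLt, hmem⟩ + φ (v i) := rfl
        _ = Y[(i : ℕ)]'(by rw [hYlen]; exact i.isLt) := by
            rw [hφv, hr_def, ← hgr]; ring
    -- map equality
    have hmap : X.map (evalI f) = Y := by
      apply List.ext_getElem (by simp [hYlen, hn_def])
      intro i h1 h2
      rw [List.getElem_map]
      exact hnode ⟨i, by simpa using h1⟩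
    -- chain
    have hchY : List.Chain' (fun a b => c ≤ |b - a|) Y :=
      List.IsChain.tail (l := 0 :: Y) (vals_chain hc0.le gr X 0)
    have hchX : List.Chain' (fun a b => c ≤ |evalI f b - evalI f a|) X :=
      by unfold List.Chain'; exact (List.isChain_map (evalI f)).mp (by rw [hmap]; exact hchY)
    refine ⟨f, ?_, lt_of_le_of_lt hdist hc2⟩
    exact hchX.imp fun {a b} hab => lt_of_lt_of_le hc1 hab
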